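/- With l < r defined as the right endpoint of supp(μ) ∩ (-∞,0) and left endpoint of supp(μ) ∩ [0,∞) respectively, suppose m = (l+r)/2 < α < r. Then h(t) = ∫_{(-∞,0)} e^{-(b-α)²t/2} μ(db) / ∫_{[0,∞)} e^{-(b-α)²t/2} μ(db) → 0 as t → ∞. -/

import Mathlib

open MeasureTheory Set Filter

/-- The left endpoint `r` of the support of `μ` restricted to `[0,∞)`. -/
noncomputable def rEnd (μ : Measure ℝ) : ℝ :=
  sInf {s : ℝ | 0 ≤ s ∧ ∀ ε > (0:ℝ), 0 < μ (Set.Ico s (s + ε))}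

/-- The right endpoint `l` of the support of `μ` restricted to `(-∞,0)`. -/
noncomputable def lEnd (μ : Measure ℝ) : ℝ :=
  sSup {s : ℝ | s < 0 ∧ ∀ ε > (0:ℝ), 0 < μ (Set.Ioc (s - ε) s)}




lemma rSet_nonempty (μ : Measure ℝ) (h : 0 < μ (Ici (0:ℝ))) :
    {s : ℝ | 0 ≤ s ∧ ∀ ε > (0:ℝ), 0 < μ (Set.Ico s (s + ε))}.Nonempty := by
  -- find c with μ (Ico 0 c) > 0
  obtain ⟨c, hc⟩ : ∃ c : ℝ, 0 < μ (Ico 0 c) := by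
    by_contra hcon
    push_neg at hcon
    have hsub : Ici (0:ℝ) ⊆ ⋃ n : ℕ, Ico (0:ℝ) n := by
      intro b hb
      obtain ⟨n, hn⟩ := exists_nat_gt b
      exact mem_iUnion.2 ⟨n, hb, hn⟩
    have : μ (Ici (0:ℝ)) ≤ ∑' n : ℕ, μ (Ico (0:ℝ) n) :=
      le_trans (measure_mono hsub) (measure_iUnion_le _)
    have hz : ∀ n : ℕ, μ (Ico (0:ℝ) n) = 0 := fun n => le_antisymm (hcon n) zero_le
    rw [ENNReal.tsum_eq_zero.2 hz] at this
    exact absurd (le_antisymm this zero_le) (ne_of_gt h)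
  set T : Set ℝ := {y : ℝ | μ (Ico 0 y) = 0} with hT
  have hT0 : (0:ℝ) ∈ T := by simp [hT]
  have hTbdd : BddAbove T := by
    refine ⟨c, fun y hy => ?_⟩
    by_contra hyc
    push_neg at hyc
    have hy' : μ (Ico 0 y) = 0 := hy
    have := measure_mono (μ := μ) (Ico_subset_Ico (le_refl (0:ℝ)) hyc.le)
    rw [hy'] at this
    exact absurd (le_antisymm this zero_le) (ne_of_gt hc)
  set s := sSup T with hs
  have hs0 : 0 ≤ s := le_csSup hTbdd hT0
  have hnull : μ (Ico 0 s) = 0 := by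
    have hsub : Ico (0:ℝ) s ⊆ ⋃ n : ℕ, Ico (0:ℝ) (s - 1/(n+1)) := by
      intro x hx
      obtain ⟨n, hn⟩ := exists_nat_one_div_lt (sub_pos.2 hx.2)
      exact mem_iUnion.2 ⟨n, hx.1, by push_cast at hn ⊢; linarith⟩
    refine le_antisymm (le_trans (measure_mono hsub) ?_) zero_le
    have heach : ∀ n : ℕ, μ (Ico (0:ℝ) (s - 1/(n+1))) = 0 := by
      intro n
      have hlt : s - 1/(n+1) < sSup T := by
        have : (0:ℝ) < 1/(n+1) := by positivity
        linarith
      obtain ⟨y, hyT, hy⟩ := exists_lt_of_lt_csSup ⟨0, hT0⟩ hlt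
      have hy' : μ (Ico 0 y) = 0 := hyT
      have := measure_mono (μ := μ) (Ico_subset_Ico (le_refl (0:ℝ)) hy.le)
      rw [hy'] at this
      exact le_antisymm this zero_le
    have h2 := measure_iUnion_le (μ := μ) (fun n : ℕ => Ico (0:ℝ) (s - 1/(n+1)))
    rw [ENNReal.tsum_eq_zero.2 heach] at h2
    exact h2
  refine ⟨s, hs0, fun δ hδ => ?_⟩
  have hnot : μ (Ico 0 (s + δ)) ≠ 0 := by
    intro hmem
    have : s + δ ≤ s := le_csSup hTbdd hmem
    linarith
  have hsplit : Ico (0:ℝ) (s + δ) ⊆ Ico 0 s ∪ Ico s (s + δ) := by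
    intro x hx
    rcases lt_or_ge x s with h1 | h1
    · exact Or.inl ⟨hx.1, h1⟩
    · exact Or.inr ⟨h1, hx.2⟩
  have h3 : μ (Ico 0 (s + δ)) ≤ μ (Ico 0 s) + μ (Ico s (s + δ)) :=
    (measure_mono hsplit).trans (measure_union_le _ _)
  rw [hnull, zero_add] at h3
  exact lt_of_lt_of_le (zero_lt_iff.2 hnot) h3

lemma rEnd_props (μ : Measure ℝ) (h : 0 < μ (Ici (0:ℝ))) :
    0 ≤ rEnd μ ∧ ∀ ε > (0:ℝ), 0 < μ (Set.Ico (rEnd μ) (rEnd μ + ε)) := by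
  set S := {s : ℝ | 0 ≤ s ∧ ∀ ε > (0:ℝ), 0 < μ (Set.Ico s (s + ε))} with hS
  have hne : S.Nonempty := rSet_nonempty μ h
  have hbdd : BddBelow S := ⟨0, fun x hx => hx.1⟩
  have hr0 : 0 ≤ rEnd μ := le_csInf hne (fun x hx => hx.1)
  refine ⟨hr0, fun ε hε => ?_⟩
  have : sInf S < rEnd μ + ε/2 := by
    rw [rEnd]; linarith [hr0, hε]
  obtain ⟨s, hsS, hs⟩ := exists_lt_of_csInf_lt hne this
  have hrs : rEnd μ ≤ s := csInf_le hbdd hsS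
  have := hsS.2 (ε/2) (by linarith)
  refine lt_of_lt_of_le this (measure_mono (Ico_subset_Ico hrs (by linarith)))



lemma lEnd_nonpos (μ : Measure ℝ) : lEnd μ ≤ 0 :=
  Real.sSup_nonpos (fun x hx => hx.1.le)

lemma lEnd_null (μ : Measure ℝ) : μ (Set.Ioo (lEnd μ) 0) = 0 := by
  set L := {s : ℝ | s < 0 ∧ ∀ ε > (0:ℝ), 0 < μ (Set.Ioc (s - ε) s)} with hL
  set l := lEnd μ with hldef
  by_contra hcon
  have hpos : 0 < μ (Ioo l 0) := zero_lt_iff.2 hcon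
  have hl0 : l < 0 := by
    rcases lt_or_eq_of_le (lEnd_nonpos μ) with h | h
    · exact h
    · rw [← hldef] at h; rw [h] at hpos; simp at hpos
  -- find c ∈ (l,0) with μ (Ioo l c) > 0
  obtain ⟨c, hcneg, hc⟩ : ∃ c : ℝ, c < 0 ∧ 0 < μ (Ioo l c) := by
    by_contra hcc
    push_neg at hcc
    have heach : ∀ n : ℕ, μ (Ioo l (-(1/(n+1)))) = 0 := by
      intro n
      have hp : (0:ℝ) < 1/((n:ℝ)+1) := by positivity
      have hneg : -(1/((n:ℝ)+1)) < 0 := by linarith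
      exact le_antisymm (hcc _ hneg) zero_le
    have hsub : Ioo l 0 ⊆ ⋃ n : ℕ, Ioo l (-(1/(n+1))) := by
      intro x hx
      obtain ⟨n, hn⟩ := exists_nat_one_div_lt (neg_pos.2 hx.2)
      refine mem_iUnion.2 ⟨n, hx.1, ?_⟩
      push_cast at hn ⊢
      linarith
    have h2 := measure_iUnion_le (μ := μ) (fun n : ℕ => Ioo l (-(1/(n+1))))
    rw [ENNReal.tsum_eq_zero.2 heach] at h2
    exact hcon (le_antisymm (le_trans (measure_mono hsub) h2) zero_le)
  -- B' = points y with mass in (y, c)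
  set B := {y : ℝ | 0 < μ (Ioo y c)} with hB
  have hlB : l ∈ B := hc
  have hBbdd : BddAbove B := by
    refine ⟨c, fun y hy => ?_⟩
    by_contra hyc
    push_neg at hyc
    have : Ioo y c = ∅ := Ioo_eq_empty (not_lt.2 hyc.le)
    rw [hB] at hy
    simp only [mem_setOf_eq, this, measure_empty] at hy
    exact lt_irrefl _ hy
  set s := sSup B with hs
  have hls : l ≤ s := le_csSup hBbdd hlB
  have hsc : s ≤ c := csSup_le ⟨l, hlB⟩ (fun y hy => by
    by_contra hyc
    push_neg at hyc
    have hy' : (0:ENNReal) < μ (Ioo y c) := hy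
    rw [Ioo_eq_empty (not_lt.2 hyc.le), measure_empty] at hy'
    exact lt_irrefl _ hy')
  have hsneg : s < 0 := lt_of_le_of_lt hsc hcneg
  have hnull2 : μ (Ioo s c) = 0 := by
    have heach : ∀ n : ℕ, μ (Ioo (s + 1/(n+1)) c) = 0 := by
      intro n
      have hnot : s + 1/((n:ℝ)+1) ∉ B := by
        intro hmem
        have := le_csSup hBbdd hmem
        have hp : (0:ℝ) < 1/((n:ℝ)+1) := by positivity
        rw [← hs] at this
        linarith
      rw [hB, mem_setOf_eq] at hnot
      simpa using (not_lt.1 hnot)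
    have hsub : Ioo s c ⊆ ⋃ n : ℕ, Ioo (s + 1/(n+1)) c := by
      intro x hx
      obtain ⟨n, hn⟩ := exists_nat_one_div_lt (sub_pos.2 hx.1)
      refine mem_iUnion.2 ⟨n, ?_, hx.2⟩
      push_cast at hn ⊢
      linarith
    have h2 := measure_iUnion_le (μ := μ) (fun n : ℕ => Ioo (s + 1/(n+1)) c)
    rw [ENNReal.tsum_eq_zero.2 heach] at h2
    exact le_antisymm (le_trans (measure_mono hsub) h2) zero_le
  have hsL : s ∈ L := by
    refine ⟨hsneg, fun δ hδ => ?_⟩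
    have hlt : s - δ < sSup B := by rw [← hs]; linarith
    obtain ⟨y, hyB, hy⟩ := exists_lt_of_lt_csSup ⟨l, hlB⟩ hlt
    have hyμ : 0 < μ (Ioo y c) := hyB
    have hsplit : Ioo y c ⊆ Ioc (s - δ) s ∪ Ioo s c := by
      intro x hx
      rcases le_or_gt x s with h1 | h1
      · exact Or.inl ⟨hy.trans hx.1, h1⟩
      · exact Or.inr ⟨h1, hx.2⟩
    have h3 : μ (Ioo y c) ≤ μ (Ioc (s - δ) s) + μ (Ioo s c) :=
      (measure_mono hsplit).trans (measure_union_le _ _)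
    rw [hnull2, add_zero] at h3
    exact lt_of_lt_of_le hyμ h3
  have hcontra : s ≤ l := le_csSup ⟨0, fun x hx => hx.1.le⟩ hsL
  -- then Ioo l c ⊆ Ioo s c is null
  have : μ (Ioo l c) = 0 := by
    have := measure_mono (μ := μ) (Ioo_subset_Ioo hcontra (le_refl c))
    rw [hnull2] at this
    exact le_antisymm this zero_le
  rw [this] at hc
  exact lt_irrefl _ hc

theorem stmt_11 (μ : Measure ℝ) [IsProbabilityMeasure μ]
    (hμ0 : 0 < μ (Set.Ici (0:ℝ))) (hμ1 : μ (Set.Ici (0:ℝ)) < 1)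
    (ε : ℝ) (hε : 0 < ε)
    (hexp : Integrable (fun b => Real.exp (ε * b ^ 2)) μ)
    (l r : ℝ) (hl : l = lEnd μ) (hr : r = rEnd μ) (hlr : l < r)
    (α : ℝ) (hα1 : (l + r) / 2 < α) (hα2 : α < r) :
    Tendsto (fun t =>
      (∫ b in Set.Iio (0:ℝ), Real.exp (-(b - α) ^ 2 * t / 2) ∂μ) /
      (∫ b in Set.Ici (0:ℝ), Real.exp (-(b - α) ^ 2 * t / 2) ∂μ))
      atTop (nhds 0) := by
  have hr0 : 0 ≤ r := hr ▸ (rEnd_props μ hμ0).1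
  have hrm : ∀ ε > (0:ℝ), 0 < μ (Set.Ico r (r + ε)) := hr ▸ (rEnd_props μ hμ0).2
  have hl0 : l ≤ 0 := hl ▸ lEnd_nonpos μ
  have hlnull : μ (Set.Ioo l 0) = 0 := hl ▸ lEnd_null μ

  have hlα : l < α := by linarith
  set γ := (r + (2*α - l))/2 with hγ
  have hrγ : r < γ := by rw [hγ]; linarith
  have hαγ : α < γ := lt_trans hα2 hrγ
  have hγlt : γ - α < α - l := by rw [hγ]; linarith
  -- positive mass in [r, γ)
  have hmass : 0 < μ (Ico r γ) := by
    have h := hrm (γ - r) (by linarith)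
    have he : r + (γ - r) = γ := by ring
    rwa [he] at h
  set m := (μ (Ico r γ)).toReal with hm
  have hmpos : 0 < m := ENNReal.toReal_pos hmass.ne' (measure_ne_top μ _)
  -- integrability
  have hint : ∀ (t : ℝ), 0 ≤ t → ∀ (s : Set ℝ),
      IntegrableOn (fun b => Real.exp (-(b - α) ^ 2 * t / 2)) s μ := by
    intro t ht s
    refine Integrable.mono' (integrable_const 1) ?_ ?_
    · exact Continuous.aestronglyMeasurable (by fun_prop)
    · filter_upwards with b
      rw [Real.norm_eq_abs, abs_of_pos (Real.exp_pos _)]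
      rw [Real.exp_le_one_iff]
      nlinarith [sq_nonneg (b - α)]
  -- numerator bound
  have hnum : ∀ t : ℝ, 0 ≤ t →
      (∫ b in Set.Iio (0:ℝ), Real.exp (-(b - α) ^ 2 * t / 2) ∂μ) ≤
        Real.exp (-(α - l) ^ 2 * t / 2) := by
    intro t ht
    have hb : ∀ᵐ b ∂(μ.restrict (Set.Iio (0:ℝ))),
        Real.exp (-(b - α) ^ 2 * t / 2) ≤ Real.exp (-(α - l) ^ 2 * t / 2) := by
      rw [ae_restrict_iff' measurableSet_Iio]
      have hae : ∀ᵐ b ∂μ, b ∉ Ioo l 0 := by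
        rw [ae_iff]; simp only [not_not, setOf_mem_eq]; exact hlnull
      filter_upwards [hae] with b hbnot hbneg
      have hble : b ≤ l := by
        by_contra hbl; push_neg at hbl; exact hbnot ⟨hbl, hbneg⟩
      rw [Real.exp_le_exp]
      have h1 : (α - l) ^ 2 ≤ (b - α) ^ 2 := by nlinarith
      nlinarith
    calc (∫ b in Set.Iio (0:ℝ), Real.exp (-(b - α) ^ 2 * t / 2) ∂μ)
        ≤ ∫ _b in Set.Iio (0:ℝ), Real.exp (-(α - l) ^ 2 * t / 2) ∂μ :=
          integral_mono_ae (hint t ht _) (integrable_const _) hb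
      _ = (μ (Set.Iio (0:ℝ))).toReal * Real.exp (-(α - l) ^ 2 * t / 2) := by
          rw [setIntegral_const, smul_eq_mul]; rfl
      _ ≤ 1 * Real.exp (-(α - l) ^ 2 * t / 2) := by
          apply mul_le_mul_of_nonneg_right _ (Real.exp_pos _).le
          have h1 : μ (Set.Iio (0:ℝ)) ≤ 1 := prob_le_one
          have := ENNReal.toReal_mono (by simp) h1
          simpa using this
      _ = Real.exp (-(α - l) ^ 2 * t / 2) := one_mul _
  -- denominator bound
  have hden : ∀ t : ℝ, 0 ≤ t →
      Real.exp (-(γ - α) ^ 2 * t / 2) * m ≤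
        ∫ b in Set.Ici (0:ℝ), Real.exp (-(b - α) ^ 2 * t / 2) ∂μ := by
    intro t ht
    have hsub : Ico r γ ⊆ Ici (0:ℝ) := fun x hx => le_trans hr0 hx.1
    have h1 : (∫ b in Set.Ico r γ, Real.exp (-(b - α) ^ 2 * t / 2) ∂μ) ≤
        ∫ b in Set.Ici (0:ℝ), Real.exp (-(b - α) ^ 2 * t / 2) ∂μ := by
      apply setIntegral_mono_set (hint t ht _)
      · filter_upwards with b using (Real.exp_pos _).le
      · exact HasSubset.Subset.eventuallyLE hsub
    refine le_trans ?_ h1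
    have h2 : Real.exp (-(γ - α) ^ 2 * t / 2) * m =
        ∫ _b in Set.Ico r γ, Real.exp (-(γ - α) ^ 2 * t / 2) ∂μ := by
      rw [setIntegral_const, smul_eq_mul, mul_comm]; rfl
    rw [h2]
    apply setIntegral_mono_on (integrable_const _) (hint t ht _) measurableSet_Ico
    intro b hb
    rw [Real.exp_le_exp]
    have hbα : 0 ≤ b - α := by have := hb.1; linarith
    have h3 : (b - α) ^ 2 ≤ (γ - α) ^ 2 := by nlinarith [hb.2]
    nlinarith
  -- squeeze
  apply squeeze_zero' (g := fun t => Real.exp (-(α - l) ^ 2 * t / 2) /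
      (Real.exp (-(γ - α) ^ 2 * t / 2) * m))
  · filter_upwards with t
    apply div_nonneg <;> exact integral_nonneg (fun b => (Real.exp_pos _).le)
  · filter_upwards [eventually_ge_atTop (0:ℝ)] with t ht
    refine div_le_div₀ (Real.exp_pos _).le (hnum t ht)
      (mul_pos (Real.exp_pos _) hmpos) (hden t ht)
  · have heq : (fun t => Real.exp (-(α - l) ^ 2 * t / 2) /
        (Real.exp (-(γ - α) ^ 2 * t / 2) * m)) =
        fun t => (1/m) * Real.exp ((((γ - α) ^ 2 - (α - l) ^ 2)/2) * t) := by
      funext t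
      rw [div_mul_eq_div_div, ← Real.exp_sub, one_div, inv_mul_eq_div]
      congr 1
      ring
    rw [heq]
    have hc : (((γ - α) ^ 2 - (α - l) ^ 2)/2) < 0 := by
      have : (γ - α) ^ 2 < (α - l) ^ 2 := by
        apply pow_lt_pow_left₀ hγlt (by linarith) (by norm_num)
      linarith
    have h4 : Tendsto (fun t : ℝ => (((γ - α) ^ 2 - (α - l) ^ 2)/2) * t) atTop atBot :=
      tendsto_id.const_mul_atTop_of_neg hc
    have h5 := Real.tendsto_exp_atBot.comp h4
    have := h5.const_mul (1/m)
    simpa using this
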